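/- Let 0 < α ≤ 1, η > 0, and let (c_t)_{t≥0} be a nonnegative sequence such that there exist phase lengths T_i = 2^i·T (for T > 0) with c_t ≤ D·2^{-i} for all t in phase i (i.e., Σ_{j<i} T_j ≤ t < Σ_{j≤i} T_j), where D > 0. Then for any t within phase i, Π_{s=0}^{t-1} (1 + 4η c_s)² ≤ (1 + 4η D)^{2T}·(1 + 4η D/2)^{4T}·…, and in particular Π_{s=0}^{t-1}(1 + 4η c_s)² ≤ (1 + 4η D·2^{-i})^{4(i+1)T_i}. -/

import Mathlib

theorem halving_errors_doubling_intervals (η D : ℝ) (hη : 0 < η) (hD : 0 < D)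
    (T : ℕ) (hT : 0 < T) (c : ℕ → ℝ) (hc : ∀ t, 0 ≤ c t)
    (hphase : ∀ i t : ℕ, (∑ j ∈ Finset.range i, 2 ^ j * T) ≤ t →
      t < (∑ j ∈ Finset.range (i + 1), 2 ^ j * T) → c t ≤ D * (2 : ℝ) ^ (-(i : ℤ))) :
    ∀ i t : ℕ, t < (∑ j ∈ Finset.range (i + 1), 2 ^ j * T) →
      (∏ s ∈ Finset.range t, (1 + 4 * η * c s) ^ 2) ≤
        (1 + 4 * η * D * (2 : ℝ) ^ (-(i : ℤ))) ^ (4 * (i + 1) * (2 ^ i * T)) := by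
  -- abbreviations
  set S : ℕ → ℕ := fun i => ∑ j ∈ Finset.range i, 2 ^ j * T with hS
  set x : ℕ → ℝ := fun i => 4 * η * D * (2 : ℝ) ^ (-(i : ℤ)) with hxdef
  have hxpos : ∀ i : ℕ, 0 < x i := by
    intro i; simp only [hxdef]; positivity
  have hhalf : ∀ i : ℕ, x i = 2 * x (i + 1) := by
    intro i
    simp only [hxdef]
    have : (-(i : ℤ)) = -(((i + 1 : ℕ) : ℤ)) + 1 := by push_cast; ring
    rw [this, zpow_add₀ (by norm_num : (2:ℝ) ≠ 0)]
    ring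
  have hfacone : ∀ s : ℕ, (1:ℝ) ≤ (1 + 4 * η * c s) ^ 2 := by
    intro s
    have h := hc s
    have h2 : 0 ≤ 4 * η * c s := by positivity
    nlinarith
  have hfacbound : ∀ i s : ℕ, S i ≤ s → s < S (i + 1) →
      (1 + 4 * η * c s) ^ 2 ≤ (1 + x i) ^ 2 := by
    intro i s h1 h2
    have hcs := hphase i s h1 h2
    have h1' : 0 ≤ 1 + 4 * η * c s := by have := hc s; positivity
    apply pow_le_pow_left₀ h1'
    have : 4 * η * c s ≤ x i := by
      simp only [hxdef]
      have := mul_le_mul_of_nonneg_left hcs (by positivity : (0:ℝ) ≤ 4 * η)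
      linarith [this]
    linarith
  have hsq : ∀ a : ℝ, 0 ≤ a → 1 + 2 * a ≤ (1 + a) ^ 2 := by
    intro a ha; nlinarith
  -- strengthened claim with ≤
  have key : ∀ i : ℕ, ∀ t : ℕ, t ≤ S (i + 1) →
      (∏ s ∈ Finset.range t, (1 + 4 * η * c s) ^ 2) ≤
        (1 + x i) ^ (4 * (i + 1) * (2 ^ i * T)) := by
    intro i
    induction i with
    | zero =>
      intro t ht
      have hS1 : S 1 = T := by simp [hS]
      rw [hS1] at ht
      have h1 : (∏ s ∈ Finset.range t, (1 + 4 * η * c s) ^ 2) ≤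
          ∏ s ∈ Finset.range t, (1 + x 0) ^ 2 := by
        apply Finset.prod_le_prod
        · intro s _; positivity
        · intro s hs
          rw [Finset.mem_range] at hs
          apply hfacbound 0 s (by simp [hS])
          have h1 : S (0 + 1) = T := by simp [hS]
          omega
      rw [Finset.prod_const] at h1
      calc (∏ s ∈ Finset.range t, (1 + 4 * η * c s) ^ 2)
          ≤ ((1 + x 0) ^ 2) ^ (Finset.range t).card := h1
        _ = (1 + x 0) ^ (2 * t) := by rw [← pow_mul]; simp
        _ ≤ (1 + x 0) ^ (4 * (0 + 1) * (2 ^ 0 * T)) := by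
            apply pow_le_pow_right₀ (by linarith [hxpos 0])
            omega
    | succ i ih =>
      intro t ht
      have hbase : (1:ℝ) ≤ 1 + x (i + 1) := by linarith [hxpos (i+1)]
      have hlift : (1 + x i) ^ (4 * (i + 1) * (2 ^ i * T)) ≤
          (1 + x (i + 1)) ^ (4 * (i + 1) * (2 ^ (i + 1) * T)) := by
        have h1 : 1 + x i ≤ (1 + x (i + 1)) ^ 2 := by
          rw [hhalf i]; exact hsq _ (hxpos (i+1)).le
        calc (1 + x i) ^ (4 * (i + 1) * (2 ^ i * T))
            ≤ ((1 + x (i + 1)) ^ 2) ^ (4 * (i + 1) * (2 ^ i * T)) := by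
              apply pow_le_pow_left₀ (by linarith [hxpos i]) h1
          _ = (1 + x (i + 1)) ^ (4 * (i + 1) * (2 ^ (i + 1) * T)) := by
              rw [← pow_mul]; ring_nf
      by_cases hcase : t ≤ S (i + 1)
      · calc (∏ s ∈ Finset.range t, (1 + 4 * η * c s) ^ 2)
            ≤ (1 + x i) ^ (4 * (i + 1) * (2 ^ i * T)) := ih t hcase
          _ ≤ (1 + x (i + 1)) ^ (4 * (i + 1) * (2 ^ (i + 1) * T)) := hlift
          _ ≤ (1 + x (i + 1)) ^ (4 * (i + 1 + 1) * (2 ^ (i + 1) * T)) := by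
              apply pow_le_pow_right₀ hbase
              have : 4 * (i + 1) ≤ 4 * (i + 1 + 1) := by omega
              exact Nat.mul_le_mul_right _ this
      · push_neg at hcase
        have hsplit : (∏ s ∈ Finset.range (S (i+1)), (1 + 4 * η * c s) ^ 2) *
            (∏ s ∈ Finset.Ico (S (i+1)) t, (1 + 4 * η * c s) ^ 2) =
            ∏ s ∈ Finset.range t, (1 + 4 * η * c s) ^ 2 :=
          Finset.prod_range_mul_prod_Ico _ hcase.le
        have h1 : (∏ s ∈ Finset.range (S (i+1)), (1 + 4 * η * c s) ^ 2) ≤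
            (1 + x i) ^ (4 * (i + 1) * (2 ^ i * T)) := ih _ le_rfl
        have h2 : (∏ s ∈ Finset.Ico (S (i+1)) t, (1 + 4 * η * c s) ^ 2) ≤
            ((1 + x (i + 1)) ^ 2) ^ (t - S (i+1)) := by
          have := Finset.prod_le_prod (s := Finset.Ico (S (i+1)) t)
            (f := fun s => (1 + 4 * η * c s) ^ 2)
            (g := fun _ => (1 + x (i + 1)) ^ 2)
            (by intro s _; positivity)
            (by
              intro s hs
              rw [Finset.mem_Ico] at hs
              exact hfacbound (i+1) s hs.1 (lt_of_lt_of_le hs.2 ht))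
          simpa [Nat.card_Ico] using this
        have hcard : t - S (i+1) ≤ 2 ^ (i + 1) * T := by
          have hstep : S (i + 1 + 1) = S (i + 1) + 2 ^ (i + 1) * T := by
            simp [hS, Finset.sum_range_succ]
          omega
        have h2' : (∏ s ∈ Finset.Ico (S (i+1)) t, (1 + 4 * η * c s) ^ 2) ≤
            (1 + x (i + 1)) ^ (2 * (2 ^ (i + 1) * T)) := by
          calc (∏ s ∈ Finset.Ico (S (i+1)) t, (1 + 4 * η * c s) ^ 2)
              ≤ ((1 + x (i + 1)) ^ 2) ^ (t - S (i+1)) := h2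
            _ ≤ ((1 + x (i + 1)) ^ 2) ^ (2 ^ (i + 1) * T) := by
                apply pow_le_pow_right₀ (by nlinarith [hxpos (i+1)]) hcard
            _ = (1 + x (i + 1)) ^ (2 * (2 ^ (i + 1) * T)) := by
                rw [← pow_mul]
        have hpos1 : (0:ℝ) ≤ ∏ s ∈ Finset.range (S (i+1)), (1 + 4 * η * c s) ^ 2 := by
          apply Finset.prod_nonneg; intro s _; positivity
        have hpos2 : (0:ℝ) ≤ (1 + x i) ^ (4 * (i + 1) * (2 ^ i * T)) := by positivity
        calc (∏ s ∈ Finset.range t, (1 + 4 * η * c s) ^ 2)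
            = (∏ s ∈ Finset.range (S (i+1)), (1 + 4 * η * c s) ^ 2) *
              (∏ s ∈ Finset.Ico (S (i+1)) t, (1 + 4 * η * c s) ^ 2) := hsplit.symm
          _ ≤ (1 + x i) ^ (4 * (i + 1) * (2 ^ i * T)) *
              (1 + x (i + 1)) ^ (2 * (2 ^ (i + 1) * T)) := by
              apply mul_le_mul h1 h2' (Finset.prod_nonneg (by intro s _; positivity)) hpos2
          _ ≤ (1 + x (i + 1)) ^ (4 * (i + 1) * (2 ^ (i + 1) * T)) *
              (1 + x (i + 1)) ^ (2 * (2 ^ (i + 1) * T)) := by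
              apply mul_le_mul_of_nonneg_right hlift (by positivity)
          _ = (1 + x (i + 1)) ^ (4 * (i + 1) * (2 ^ (i + 1) * T) + 2 * (2 ^ (i + 1) * T)) := by
              rw [← pow_add]
          _ ≤ (1 + x (i + 1)) ^ (4 * (i + 1 + 1) * (2 ^ (i + 1) * T)) := by
              apply pow_le_pow_right₀ hbase
              have he : 4 * (i + 1) * (2 ^ (i + 1) * T) + 2 * (2 ^ (i + 1) * T) =
                  (4 * (i + 1) + 2) * (2 ^ (i + 1) * T) := by ring
              rw [he]
              exact Nat.mul_le_mul_right _ (by omega)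
  intro i t ht
  exact key i t ht.le
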